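/- Define integer sequences (x_n), (y_n) by x_0 = y_0 = 0 and x_{n+1} = −x_n + 2y_n + 1, y_{n+1} = −4x_n + 7y_n + 3. Let x, y, z be integers with 0 < x < y < z and gcd(x, y, z) = 1, and let D = (0, x, y, z). Then B_1(D) = 2 if and only if there exists n ≥ 1 with (x, y, z) = (x_n, y_n, y_n + 1). -/

import Mathlib

/-- The recursively defined pair sequence `(x_n, y_n)`: `x_0 = y_0 = 0`,
`x_{n+1} = −x_n + 2y_n + 1`, `y_{n+1} = −4x_n + 7y_n + 3`. -/
def pellSeq : ℕ → ℤ × ℤ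
  | 0 => (0, 0)
  | n + 1 => (-(pellSeq n).1 + 2 * (pellSeq n).2 + 1,
              -4 * (pellSeq n).1 + 7 * (pellSeq n).2 + 3)

/-- `π_1` of the codimension-3 degree sequence `(0, x, y, z)`. -/
noncomputable def piOne (x y z : ℤ) : ℚ := ((y * z : ℤ) : ℚ) / (((y - x) * (z - x) : ℤ) : ℚ)

/-- `π_2` of the codimension-3 degree sequence `(0, x, y, z)`. -/
noncomputable def piTwo (x y z : ℤ) : ℚ := ((x * z : ℤ) : ℚ) / (((y - x) * (z - y) : ℤ) : ℚ)

/-- `π_3` of the codimension-3 degree sequence `(0, x, y, z)`. -/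
noncomputable def piThree (x y z : ℤ) : ℚ := ((x * y : ℤ) : ℚ) / (((z - x) * (z - y) : ℤ) : ℚ)

lemma pell_inv (n : ℕ) : (pellSeq n).2 * ((pellSeq n).2 + 1) =
    2 * (((pellSeq n).2 - (pellSeq n).1) * ((pellSeq n).2 - (pellSeq n).1 + 1)) := by
  induction n with
  | zero => simp [pellSeq]
  | succ n ih => simp only [pellSeq]; linear_combination ih

lemma descent : ∀ N : ℕ, ∀ x y : ℤ, y ≤ (N : ℤ) → 0 < x → x < y →
    y * (y + 1) = 2 * ((y - x) * (y - x + 1)) →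
    ∃ n : ℕ, 1 ≤ n ∧ (pellSeq n).1 = x ∧ (pellSeq n).2 = y := by
  intro N
  induction N with
  | zero => intro x y hy hx hxy _; omega
  | succ N ih =>
    intro x y hy hx hxy hinv
    set x0 : ℤ := 7 * x - 2 * y - 1 with hx0d
    set y0 : ℤ := 4 * x - y - 1 with hy0d
    have hinv0 : y0 * (y0 + 1) = 2 * ((y0 - x0) * (y0 - x0 + 1)) := by
      rw [hx0d, hy0d]; linear_combination hinv
    have h2x : 2 * x ≤ y := by
      by_contra h
      push_neg at h
      nlinarith [hinv, mul_le_mul (by omega : 2*(y-x) ≤ y - 1) (by omega : 2*(y-x) + 2 ≤ y + 1) (by omega : (0:ℤ) ≤ 2*(y-x)+2) (by omega : (0:ℤ) ≤ y - 1)]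
    have hx0nn : 0 ≤ x0 := by
      rw [hx0d]
      by_contra h
      push_neg at h
      nlinarith [hinv, mul_le_mul (by omega : 5*y ≤ 7*(y-x)) (by omega : 5*y + 7 ≤ 7*(y-x) + 7) (by omega : (0:ℤ) ≤ 5*y+7) (by omega : (0:ℤ) ≤ 7*(y-x))]
    have h3x : 3 * x ≤ y := by
      by_contra h
      push_neg at h
      nlinarith [hinv, mul_le_mul (by omega : 3*(y-x) ≤ 2*y - 1) (by omega : 3*(y-x) + 3 ≤ 2*y + 2) (by omega : (0:ℤ) ≤ 3*(y-x)+3) (by omega : (0:ℤ) ≤ 2*y-1)]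
    by_cases hy0 : y0 = 0
    · refine ⟨1, le_refl 1, ?_, ?_⟩ <;> simp [pellSeq] <;> omega
    · have hy0pos : 0 < y0 := by omega
      have hx0pos : 0 < x0 := by
        rcases lt_or_eq_of_le hx0nn with h | h
        · exact h
        · exfalso; rw [← h] at hinv0; nlinarith
      have hxy0 : x0 < y0 := by
        have hne : y ≠ 3 * x := by
          intro h
          have hx1 : x = 1 := by nlinarith
          omega
        omega
      have hy0lt : y0 ≤ (N : ℤ) := by omega
      obtain ⟨n, hn1, h1, h2⟩ := ih x0 y0 hy0lt hx0pos hxy0 hinv0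
      refine ⟨n + 1, by omega, ?_, ?_⟩ <;> simp [pellSeq, h1, h2] <;> omega


/-- A nondegenerate codimension-3 degree sequence `D = (0, x, y, z)` has
`B_1(D) = 2` if and only if `(x, y, z) = (x_n, y_n, y_n + 1)` for some `n ≥ 1`,
where `(x_n, y_n)` is the recursive sequence `pellSeq`. -/
theorem B_one_eq_two_iff_pellSeq
    (x y z : ℤ) (hx : 0 < x) (hxy : x < y) (hyz : y < z)
    (hgcd : Int.gcd x (Int.gcd y z) = 1)
    (L : ℕ)
    (hL : IsLeast {L' : ℕ | 0 < L' ∧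
      (∃ n : ℤ, (L' : ℚ) * piOne x y z = n) ∧
      (∃ n : ℤ, (L' : ℚ) * piTwo x y z = n) ∧
      (∃ n : ℤ, (L' : ℚ) * piThree x y z = n)} L) :
    (L : ℚ) * piOne x y z = 2 ↔
      ∃ n : ℕ, 1 ≤ n ∧ x = (pellSeq n).1 ∧ y = (pellSeq n).2 ∧
        z = (pellSeq n).2 + 1 := by
  have ha : (0:ℤ) < (y - x) * (z - x) := mul_pos (by omega) (by omega)
  have hb : (0:ℤ) < (y - x) * (z - y) := mul_pos (by omega) (by omega)
  have hcc : (0:ℤ) < (z - x) * (z - y) := mul_pos (by omega) (by omega)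
  have haQ : (((y - x) * (z - x) : ℤ) : ℚ) ≠ 0 := by exact_mod_cast ha.ne'
  have hbQ : (((y - x) * (z - y) : ℤ) : ℚ) ≠ 0 := by exact_mod_cast hb.ne'
  have hcQ : (((z - x) * (z - y) : ℤ) : ℚ) ≠ 0 := by exact_mod_cast hcc.ne'
  constructor
  · intro hB
    have hpi1 : 1 < piOne x y z := by
      rw [piOne, lt_div_iff₀ (by exact_mod_cast ha : (0:ℚ) < (((y - x) * (z - x) : ℤ) : ℚ))]
      have h : 1 * ((y - x) * (z - x)) < y * z := by nlinarith
      exact_mod_cast h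
    have hLpos := hL.1.1
    have hL1 : L = 1 := by
      have h1 : (1:ℚ) ≤ (L:ℚ) := by exact_mod_cast hLpos
      have h2 : (L:ℚ) < 2 := by nlinarith [hB, hpi1]
      have h3 : L < 2 := by exact_mod_cast h2
      omega
    obtain ⟨-, ⟨p1, hp1⟩, ⟨p2, hp2⟩, ⟨p3, hp3⟩⟩ := hL.1
    rw [hL1, Nat.cast_one, one_mul] at hB hp2 hp3
    have E1 : y * z = 2 * ((y - x) * (z - x)) := by
      rw [piOne, div_eq_iff haQ] at hB
      exact_mod_cast hB
    have E2 : x * z = p2 * ((y - x) * (z - y)) := by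
      rw [piTwo, div_eq_iff hbQ] at hp2
      exact_mod_cast hp2
    have E3 : x * y = p3 * ((z - x) * (z - y)) := by
      rw [piThree, div_eq_iff hcQ] at hp3
      exact_mod_cast hp3
    have key : 2 * x ^ 2 = p2 * p3 * (z - y) ^ 2 := by
      have h1 : (x * z) * (x * y)
          = (p2 * ((y - x) * (z - y))) * (p3 * ((z - x) * (z - y))) := by rw [E2, E3]
      refine mul_right_cancel₀ (ne_of_gt ha) ?_
      linear_combination h1 - x ^ 2 * E1
    have hc1 : z - y = 1 := by
      by_contra hne
      set p := (z - y).toNat.minFac with hpd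
      have hp : p.Prime := Nat.minFac_prime (by omega)
      have hpc : (p : ℤ) ∣ (z - y) := by
        have h2 : (p:ℤ) ∣ ((z - y).toNat : ℤ) :=
          Int.natCast_dvd_natCast.mpr (Nat.minFac_dvd _)
        rwa [Int.toNat_of_nonneg (by omega)] at h2
      have hpZ : Prime (p : ℤ) := Nat.prime_iff_prime_int.mp hp
      have hpx : (p : ℤ) ∣ x := by
        obtain ⟨d, hd⟩ := hpc
        have hsq : (p:ℤ) * (p:ℤ) ∣ 2 * x ^ 2 :=
          ⟨p2 * p3 * d ^ 2, by rw [key, hd]; ring⟩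
        have hpdvd : (p:ℤ) ∣ 2 * x ^ 2 := (dvd_mul_right _ _).trans hsq
        rcases (hpZ.dvd_mul).mp hpdvd with h2 | hx2
        · have hp2' : p = 2 := by
            have : (p:ℤ) ∣ ((2:ℕ):ℤ) := by exact_mod_cast h2
            exact (Nat.prime_dvd_prime_iff_eq hp Nat.prime_two).mp (by exact_mod_cast this)
          rw [hp2'] at hsq
          obtain ⟨k, hk⟩ := hsq
          have h2x2 : (2:ℤ) ∣ x ^ 2 := ⟨k, by push_cast at hk; linarith⟩
          rw [hp2']
          exact_mod_cast Prime.dvd_of_dvd_pow Int.prime_two (n := 2) (by exact_mod_cast h2x2)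
        · exact hpZ.dvd_of_dvd_pow hx2
      have hyz2 : y * z = 2 * x * (y + z - x) := by linear_combination -E1
      have hpyz : (p:ℤ) ∣ y * z := by
        rw [hyz2]
        exact Dvd.dvd.mul_right (Dvd.dvd.mul_left hpx 2) _
      have hpy : (p:ℤ) ∣ y := by
        rcases (hpZ.dvd_mul).mp hpyz with h | h
        · exact h
        · have h2 := dvd_sub h hpc
          simpa using h2
      have hpz : (p:ℤ) ∣ z := by
        have h2 := dvd_add hpy hpc
        simpa using h2
      have g1 : (p:ℤ) ∣ (Int.gcd y z : ℤ) := Int.dvd_coe_gcd hpy hpz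
      have g2 : (p:ℤ) ∣ (Int.gcd x (Int.gcd y z) : ℤ) := Int.dvd_coe_gcd hpx g1
      rw [hgcd] at g2
      have : p ∣ 1 := by exact_mod_cast g2
      exact hp.one_lt.ne' (Nat.dvd_one.mp this)
    have hz : z = y + 1 := by omega
    subst hz
    have hinv : y * (y + 1) = 2 * ((y - x) * (y - x + 1)) := by linear_combination E1
    obtain ⟨n, hn1, h1, h2⟩ := descent y.toNat x y (by omega) hx hxy hinv
    exact ⟨n, hn1, h1.symm, h2.symm, by rw [h2]⟩
  · rintro ⟨n, hn1, hxe, hye, hze⟩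
    subst hxe hye hze
    have hinv := pell_inv n
    set u := (pellSeq n).1 with hu
    set v := (pellSeq n).2 with hv
    have i1 : v * (v + 1) = 2 * ((v - u) * ((v + 1) - u)) := by linear_combination hinv
    have i2 : u * (v + 1) = (v - 2*u + 1) * ((v - u) * ((v + 1) - v)) := by
      linear_combination hinv
    have i3 : u * v = (v - 2*u) * (((v + 1) - u) * ((v + 1) - v)) := by
      linear_combination hinv
    have w1 : ((1:ℕ):ℚ) * piOne u v (v + 1) = ((2:ℤ):ℚ) := by
      rw [Nat.cast_one, one_mul, piOne, div_eq_iff haQ]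
      exact_mod_cast i1
    have w2 : ((1:ℕ):ℚ) * piTwo u v (v + 1) = ((v - 2*u + 1 : ℤ):ℚ) := by
      rw [Nat.cast_one, one_mul, piTwo, div_eq_iff hbQ]
      exact_mod_cast i2
    have w3 : ((1:ℕ):ℚ) * piThree u v (v + 1) = ((v - 2*u : ℤ):ℚ) := by
      rw [Nat.cast_one, one_mul, piThree, div_eq_iff hcQ]
      exact_mod_cast i3
    have hle : L ≤ 1 := hL.2 ⟨Nat.one_pos, ⟨2, w1⟩, ⟨v - 2*u + 1, w2⟩, ⟨v - 2*u, w3⟩⟩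
    have hL1 : L = 1 := by have := hL.1.1; omega
    rw [hL1, Nat.cast_one, one_mul, piOne, div_eq_iff haQ]
    exact_mod_cast i1
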